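/- For every positive integer N, the group SL(2,ℤ/N) acts transitively on the set of cyclic subgroups of order N of (ℤ/N)²: if H₁ and H₂ are additive subgroups of (ℤ/N)², each generated by a single element and each of cardinality N, then there exists A ∈ SL(2,ℤ/N) whose action on (ℤ/N)² maps H₁ onto H₂. -/

import Mathlib

open Matrix

lemma exists_sl2_col (N : ℕ) (hN : 0 < N) (g : Fin 2 → ZMod N) (hg : addOrderOf g = N) :
    ∃ M : Matrix.SpecialLinearGroup (Fin 2) (ZMod N),
      (M : Matrix (Fin 2) (Fin 2) (ZMod N)).mulVec ![1, 0] = g := by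
  haveI : NeZero N := ⟨hN.ne'⟩
  set a := (g 0).val with ha
  set b := (g 1).val with hb
  set G := Nat.gcd a b with hG
  -- gcd (gcd a b) N = 1
  have hd : Nat.gcd G N = 1 := by
    by_contra h
    set d := Nat.gcd G N with hdd
    have hdN : d ∣ N := Nat.gcd_dvd_right _ _
    have hda : d ∣ a := (Nat.gcd_dvd_left G N).trans (Nat.gcd_dvd_left a b)
    have hdb : d ∣ b := (Nat.gcd_dvd_left G N).trans (Nat.gcd_dvd_right a b)
    have hzero : ∀ (x : ZMod N), d ∣ x.val → (N / d) • x = 0 := by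
      intro x hx
      obtain ⟨k, hk⟩ := hx
      have : (N / d) • x = (((N / d) * x.val : ℕ) : ZMod N) := by
        rw [Nat.cast_mul, ZMod.natCast_zmod_val, nsmul_eq_mul]
      rw [this, ZMod.natCast_eq_zero_iff]
      exact ⟨k, by rw [hk, ← mul_assoc, Nat.div_mul_cancel hdN]⟩
    have hsm : (N / d) • g = 0 := by
      funext i
      fin_cases i
      · exact hzero (g 0) hda
      · exact hzero (g 1) hdb
    have hdvd : N ∣ N / d := by
      have h9 := addOrderOf_dvd_of_nsmul_eq_zero hsm
      rwa [hg] at h9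
    have hdpos : 0 < d := Nat.pos_of_dvd_of_pos hdN hN
    have hle : N / d ≤ N := Nat.div_le_self N d
    have hge : N ≤ N / d := Nat.le_of_dvd (Nat.div_pos (Nat.le_of_dvd hN hdN) hdpos) hdvd
    have heq : N / d = N := le_antisymm hle hge
    have hmul : d * N = N := by
      conv_rhs => rw [← Nat.mul_div_cancel' hdN, heq]
    exact h (Nat.eq_of_mul_eq_mul_right hN (by rw [hmul, one_mul]))
  -- Bézout: obtain u v with g0*u + g1*v = (G : ZMod N)
  have key : (G : ZMod N) = g 0 * (Nat.gcdA a b : ZMod N) + g 1 * (Nat.gcdB a b : ZMod N) := by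
    have h1 : ((G : ℤ) : ZMod N) = ((a * Nat.gcdA a b + b * Nat.gcdB a b : ℤ) : ZMod N) := by
      rw [← Nat.gcd_eq_gcd_ab]
    push_cast at h1
    rwa [ZMod.natCast_zmod_val, ZMod.natCast_zmod_val] at h1
  have hu : IsUnit (G : ZMod N) := (ZMod.isUnit_iff_coprime G N).2 hd
  obtain ⟨w, hw⟩ := hu
  set Gi : ZMod N := ((w⁻¹ : (ZMod N)ˣ) : ZMod N) with hGi
  have hGGi : (G : ZMod N) * Gi = 1 := by
    rw [← hw, hGi, Units.mul_inv_eq_one]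
  set cc : ZMod N := -((Nat.gcdB a b : ZMod N) * Gi) with hcc
  set dd : ZMod N := (Nat.gcdA a b : ZMod N) * Gi with hdd'
  have hdet : g 0 * dd - cc * g 1 = 1 := by
    rw [hcc, hdd']
    calc g 0 * ((Nat.gcdA a b : ZMod N) * Gi) - -((Nat.gcdB a b : ZMod N) * Gi) * g 1
        = (g 0 * (Nat.gcdA a b : ZMod N) + g 1 * (Nat.gcdB a b : ZMod N)) * Gi := by ring
      _ = (G : ZMod N) * Gi := by rw [← key]
      _ = 1 := hGGi
  refine ⟨⟨!![g 0, cc; g 1, dd], by rw [Matrix.det_fin_two_of]; exact hdet⟩, ?_⟩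
  funext i
  fin_cases i <;>
    simp [Matrix.mulVec, dotProduct, Fin.sum_univ_two]

/-- SL(2,ℤ/N) acts transitively on cyclic subgroups of order N of (ℤ/N)². -/
theorem sl2_transitive_on_cyclic_subgroups (N : ℕ) (hN : 0 < N)
    (H₁ H₂ : AddSubgroup (Fin 2 → ZMod N))
    (h₁cyc : ∃ g, H₁ = AddSubgroup.closure {g})
    (h₂cyc : ∃ g, H₂ = AddSubgroup.closure {g})
    (h₁card : Nat.card H₁ = N) (h₂card : Nat.card H₂ = N) :
    ∃ A : Matrix.SpecialLinearGroup (Fin 2) (ZMod N),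
      (fun v => (A : Matrix (Fin 2) (Fin 2) (ZMod N)).mulVec v) ''
          (H₁ : Set (Fin 2 → ZMod N)) = (H₂ : Set (Fin 2 → ZMod N)) := by
  obtain ⟨g₁, rfl⟩ := h₁cyc
  obtain ⟨g₂, rfl⟩ := h₂cyc
  rw [← AddSubgroup.zmultiples_eq_closure] at h₁card h₂card
  have ho₁ : addOrderOf g₁ = N := by rwa [Nat.card_zmultiples] at h₁card
  have ho₂ : addOrderOf g₂ = N := by rwa [Nat.card_zmultiples] at h₂card
  obtain ⟨M₁, hM₁⟩ := exists_sl2_col N hN g₁ ho₁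
  obtain ⟨M₂, hM₂⟩ := exists_sl2_col N hN g₂ ho₂
  refine ⟨M₂ * M₁⁻¹, ?_⟩
  have hA : ((M₂ * M₁⁻¹ : Matrix.SpecialLinearGroup (Fin 2) (ZMod N)) :
      Matrix (Fin 2) (Fin 2) (ZMod N)).mulVec g₁ = g₂ := by
    have h1 : ((M₁⁻¹ : Matrix.SpecialLinearGroup (Fin 2) (ZMod N)) :
        Matrix (Fin 2) (Fin 2) (ZMod N)).mulVec g₁ = ![1, 0] := by
      rw [← hM₁, Matrix.mulVec_mulVec]
      have : ((M₁⁻¹ : Matrix.SpecialLinearGroup (Fin 2) (ZMod N)) :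
          Matrix (Fin 2) (Fin 2) (ZMod N)) * (M₁ : Matrix (Fin 2) (Fin 2) (ZMod N)) = 1 := by
        rw [← Matrix.SpecialLinearGroup.coe_mul, inv_mul_cancel,
          Matrix.SpecialLinearGroup.coe_one]
      rw [this, Matrix.one_mulVec]
    rw [Matrix.SpecialLinearGroup.coe_mul, ← Matrix.mulVec_mulVec, h1, hM₂]
  set f : (Fin 2 → ZMod N) →+ (Fin 2 → ZMod N) :=
    (Matrix.mulVecLin ((M₂ * M₁⁻¹ : Matrix.SpecialLinearGroup (Fin 2) (ZMod N)) :
      Matrix (Fin 2) (Fin 2) (ZMod N))).toAddMonoidHom with hf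
  have himg : (fun v => ((M₂ * M₁⁻¹ : Matrix.SpecialLinearGroup (Fin 2) (ZMod N)) :
      Matrix (Fin 2) (Fin 2) (ZMod N)).mulVec v) = ⇑f := by
    funext v; rfl
  rw [himg, ← AddSubgroup.coe_map, AddMonoidHom.map_closure, Set.image_singleton]
  rw [show f g₁ = g₂ from hA]
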